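/- The Gabriel product of topologizing subcategories is associative: S • (T • U) = (S • T) • U, and the zero subcategory is a two-sided unit: 0 • S = S = S • 0. -/

import Mathlib

open CategoryTheory CategoryTheory.Limits

variable {C : Type u} [Category.{v} C] [Abelian C]

/-- A full subcategory (given by a predicate on objects) is topologizing if it contains
the zero objects and is closed under subobjects, quotient objects and finite
coproducts. -/
structure IsTopologizing (T : C → Prop) : Prop where
  zero : ∀ X : C, IsZero X → T X
  sub : ∀ ⦃X Y : C⦄ (i : X ⟶ Y), Mono i → T Y → T X
  quot : ∀ ⦃X Y : C⦄ (p : X ⟶ Y), Epi p → T X → T Y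
  coprod : ∀ X Y : C, T X → T Y → T (X ⊞ Y)

/-- The Gabriel product `S • T`: objects `M` admitting a short exact sequence
`0 → M' → M → M'' → 0` with `M' ∈ T` and `M'' ∈ S`. -/
def GabrielProd (S T : C → Prop) (M : C) : Prop :=
  ∃ (X₁ X₃ : C) (i : X₁ ⟶ M) (p : M ⟶ X₃) (w : i ≫ p = 0),
    (ShortComplex.mk i p w).ShortExact ∧ T X₁ ∧ S X₃

open ZeroObject CategoryTheory.Abelian.Pseudoelement
open scoped Pseudoelement

/-- A mono together with its cokernel projection forms a short exact sequence. -/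
lemma shortExact_of_mono' {X Y : C} (f : X ⟶ Y) (hf : Mono f) :
    (ShortComplex.mk f (cokernel.π f) (cokernel.condition f)).ShortExact :=
  { exact := ShortComplex.exact_of_g_is_cokernel _ (cokernelIsCokernel f)
    mono_f := hf
    epi_g := inferInstance }

/-- An epi together with its kernel inclusion forms a short exact sequence. -/
lemma shortExact_of_epi' {X Y : C} (g : X ⟶ Y) (hg : Epi g) :
    (ShortComplex.mk (kernel.ι g) g (kernel.condition g)).ShortExact :=
  { exact := ShortComplex.exact_of_f_is_kernel _ (kernelIsKernel g)
    mono_f := inferInstance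
    epi_g := hg }

/-- One direction of associativity of the Gabriel product. -/
lemma gabrielProd_assoc_mpr {S T U : C → Prop} {M : C}
    (h : GabrielProd S (GabrielProd T U) M) : GabrielProd (GabrielProd S T) U M := by
  obtain ⟨A, X₃, i, p, w, hse, ⟨A₁, A₃, i₁, p₁, w₁, hse₁, hUA₁, hTA₃⟩, hSX₃⟩ := h
  have hmi : Mono i := hse.mono_f
  have hep : Epi p := hse.epi_g
  have hmi₁ : Mono i₁ := hse₁.mono_f
  have hep₁ : Epi p₁ := hse₁.epi_g
  set j : A₁ ⟶ M := i₁ ≫ i with hj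
  have hmj : Mono j := mono_comp _ _
  set π : M ⟶ cokernel j := cokernel.π j with hπ
  -- the map `u : A₃ ⟶ cokernel j` induced by `i`
  obtain ⟨u, hu⟩ := CokernelCofork.IsColimit.desc' hse₁.gIsCokernel (i ≫ π)
    (by rw [← Category.assoc]; exact cokernel.condition j)
  have hu : p₁ ≫ u = i ≫ π := hu
  -- the map `v : cokernel j ⟶ X₃` induced by `p`
  have hjp : j ≫ p = 0 := by rw [hj, Category.assoc, w, comp_zero]
  set v : cokernel j ⟶ X₃ := cokernel.desc j p hjp with hvdef
  have hv : π ≫ v = p := cokernel.π_desc _ _ _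
  have wuv : u ≫ v = 0 := by
    rw [← cancel_epi p₁, ← Category.assoc, hu, Category.assoc, hv, w, comp_zero]
  -- `v` is epi
  have hev : Epi v := by
    have : Epi (π ≫ v) := by rw [hv]; exact hep
    exact epi_of_epi π v
  -- `u` is mono, by a pseudoelement chase
  have hmu : Mono u := by
    apply mono_of_zero_of_map_zero
    intro a ha
    obtain ⟨a', rfl⟩ := pseudo_surjective_of_epi p₁ a
    have h1 : π (i a') = 0 := by rw [← Abelian.Pseudoelement.comp_apply, ← hu, Abelian.Pseudoelement.comp_apply, ha]
    obtain ⟨b, hb⟩ := pseudo_exact_of_exact (shortExact_of_mono' j hmj).exact _ h1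
    have hb' : i (i₁ b) = i a' := by rw [← Abelian.Pseudoelement.comp_apply]; exact hb
    have hba : i₁ b = a' := pseudo_injective_of_mono i hb'
    rw [← hba, ← Abelian.Pseudoelement.comp_apply, w₁, Abelian.Pseudoelement.zero_apply]
  -- exactness of `(u, v)`, by a pseudoelement chase
  have hex : (ShortComplex.mk u v wuv).Exact := by
    apply exact_of_pseudo_exact
    intro m hm
    obtain ⟨x, rfl⟩ := pseudo_surjective_of_epi π m
    have h1 : p x = 0 := by rw [← hv, Abelian.Pseudoelement.comp_apply]; exact hm
    obtain ⟨a, ha⟩ := pseudo_exact_of_exact hse.exact x h1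
    exact ⟨p₁ a, by rw [← Abelian.Pseudoelement.comp_apply, hu, Abelian.Pseudoelement.comp_apply, ha]⟩
  exact ⟨A₁, cokernel j, j, π, cokernel.condition j, shortExact_of_mono' j hmj, hUA₁,
    A₃, X₃, u, v, wuv, { exact := hex, mono_f := hmu, epi_g := hev }, hTA₃, hSX₃⟩

/-- The other direction of associativity of the Gabriel product. -/
lemma gabrielProd_assoc_mp {S T U : C → Prop} {M : C}
    (h : GabrielProd (GabrielProd S T) U M) : GabrielProd S (GabrielProd T U) M := by
  obtain ⟨B₁, B₃, j, q, wjq, hse, hUB₁, ⟨C₁, C₃, k, r, wkr, hse₂, hTC₁, hSC₃⟩⟩ := h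
  have hmj : Mono j := hse.mono_f
  have heq : Epi q := hse.epi_g
  have hmk : Mono k := hse₂.mono_f
  have her : Epi r := hse₂.epi_g
  set s : M ⟶ C₃ := q ≫ r with hs
  have hes : Epi s := epi_comp _ _
  set ι : kernel s ⟶ M := kernel.ι s with hι
  -- `j` factors through `kernel s`
  have hjs : j ≫ s = 0 := by rw [hs, ← Category.assoc, wjq, zero_comp]
  set j' : B₁ ⟶ kernel s := kernel.lift s j hjs with hj'def
  have hj' : j' ≫ ι = j := kernel.lift_ι _ _ _
  have hmj' : Mono j' := by
    have : Mono (j' ≫ ι) := by rw [hj']; exact hmj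
    exact mono_of_mono j' ι
  -- the map `t : kernel s ⟶ C₁`
  obtain ⟨t, ht⟩ := KernelFork.IsLimit.lift' hse₂.fIsKernel (ι ≫ q)
    (by rw [Category.assoc]; exact kernel.condition s)
  have ht : t ≫ k = ι ≫ q := ht
  have wjt : j' ≫ t = 0 := by
    rw [← cancel_mono k, Category.assoc, ht, ← Category.assoc, hj', wjq, zero_comp]
  -- `t` is epi, by a pseudoelement chase
  have het : Epi t := by
    apply epi_of_pseudo_surjective
    intro c
    obtain ⟨m, hm⟩ := pseudo_surjective_of_epi q (k c)
    have hsm : s m = 0 := by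
      rw [hs, Abelian.Pseudoelement.comp_apply, hm, ← Abelian.Pseudoelement.comp_apply, wkr, Abelian.Pseudoelement.zero_apply]
    obtain ⟨a, ha⟩ := pseudo_exact_of_exact (shortExact_of_epi' s hes).exact m hsm
    refine ⟨a, pseudo_injective_of_mono k ?_⟩
    rw [← Abelian.Pseudoelement.comp_apply, ht, Abelian.Pseudoelement.comp_apply, ha, hm]
  -- exactness of `(j', t)`, by a pseudoelement chase
  have hex : (ShortComplex.mk j' t wjt).Exact := by
    apply exact_of_pseudo_exact
    intro a haz
    have h1 : q (ι a) = 0 := by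
      rw [← Abelian.Pseudoelement.comp_apply, ← ht, Abelian.Pseudoelement.comp_apply, haz, apply_zero]
    obtain ⟨b, hb⟩ := pseudo_exact_of_exact hse.exact _ h1
    refine ⟨b, pseudo_injective_of_mono ι ?_⟩
    rw [← Abelian.Pseudoelement.comp_apply, hj', hb]
  exact ⟨kernel s, C₃, ι, s, kernel.condition s, shortExact_of_epi' s hes,
    ⟨B₁, C₁, j', t, wjt, { exact := hex, mono_f := hmj', epi_g := het }, hUB₁, hTC₁⟩, hSC₃⟩

/-- The Gabriel product of topologizing subcategories is associative,
`S • (T • U) = (S • T) • U`, and the zero subcategory is a two-sided unit: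
`0 • S = S = S • 0`. -/
theorem gabrielProd_assoc_and_unit (S T U : C → Prop)
    (hS : IsTopologizing S) (hT : IsTopologizing T) (hU : IsTopologizing U) :
    (∀ M : C, GabrielProd S (GabrielProd T U) M ↔ GabrielProd (GabrielProd S T) U M) ∧
    (∀ M : C, GabrielProd (fun X : C => IsZero X) S M ↔ S M) ∧
    (∀ M : C, GabrielProd S (fun X : C => IsZero X) M ↔ S M) := by
  refine ⟨fun M => ⟨gabrielProd_assoc_mpr, gabrielProd_assoc_mp⟩, fun M => ⟨?_, ?_⟩,
    fun M => ⟨?_, ?_⟩⟩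
  · rintro ⟨X₁, X₃, i, p, w, hse, hX₁, hX₃⟩
    have hp : p = 0 := hX₃.eq_of_tgt p 0
    have : Epi i := (ShortComplex.exact_iff_epi _ hp).1 hse.exact
    exact hS.quot i this hX₁
  · intro hM
    refine ⟨M, 0, 𝟙 M, 0, by simp, ?_, hM, isZero_zero C⟩
    exact { exact := (ShortComplex.exact_iff_epi _ rfl).2 inferInstance
            mono_f := inferInstance
            epi_g := ⟨fun g h _ => (isZero_zero C).eq_of_src g h⟩ }
  · rintro ⟨X₁, X₃, i, p, w, hse, hX₁, hX₃⟩
    have hi : i = 0 := hX₁.eq_of_src i 0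
    have : Mono p := (ShortComplex.exact_iff_mono _ hi).1 hse.exact
    exact hS.sub p this hX₃
  · intro hM
    refine ⟨0, M, 0, 𝟙 M, by simp, ?_, isZero_zero C, hM⟩
    exact { exact := (ShortComplex.exact_iff_mono _ rfl).2 inferInstance
            mono_f := ⟨fun g h _ => (isZero_zero C).eq_of_tgt g h⟩
            epi_g := inferInstance }
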